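/- Let H : ℝ × ℝ → ℝ be C² with H(x + 1, x' + 1) = H(x, x') for all x, x', and suppose there is ρ > 0 such that ∂₁₂H(x, x') ≤ -ρ for all x, x'. Then H is uniformly superlinear: for every A > 0 there exists B > 0 such that H(x, x') ≥ A·|x' - x| whenever |x' - x| ≥ B. -/

import Mathlib

open Real

/-- Partial derivative of `H` in the first variable. -/
noncomputable def D1 (H : ℝ → ℝ → ℝ) (x x' : ℝ) : ℝ := deriv (fun t => H t x') x

/-- Partial derivative of `H` in the second variable. -/
noncomputable def D2 (H : ℝ → ℝ → ℝ) (x x' : ℝ) : ℝ := deriv (fun t => H x t) x'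

/-- Mixed second partial derivative `∂₁₂H` (first in the first variable, then in the
second variable). -/
noncomputable def D12 (H : ℝ → ℝ → ℝ) (x x' : ℝ) : ℝ := deriv (fun t => D1 H x t) x'

/-- A continuous `1`-periodic real function is bounded. -/
lemma aux_bound_of_periodic {f : ℝ → ℝ} (hc : Continuous f) (hp : Function.Periodic f 1) :
    ∃ C : ℝ, 0 ≤ C ∧ ∀ s, |f s| ≤ C := by
  obtain ⟨C, hC⟩ := (isCompact_Icc (a := (0:ℝ)) (b := 1)).exists_bound_of_continuousOn
    hc.continuousOn
  refine ⟨max C 0, le_max_right _ _, fun s => ?_⟩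
  have h1 : f s = f (Int.fract s) := by
    have := hp.sub_int_mul_eq (x := s) ⌊s⌋
    simp only [mul_one] at this
    rw [Int.fract]
    exact this.symm
  rw [h1]
  refine le_trans ?_ (le_max_left _ _)
  simpa using hC (Int.fract s) ⟨Int.fract_nonneg s, (Int.fract_lt_one s).le⟩

/-- Uniform superlinearity of a periodic generating function with uniform twist:
if `H(x+1, x'+1) = H(x, x')` and `∂₁₂H ≤ -ρ < 0`, then for every `A > 0` there is `B > 0`
with `H(x, x') ≥ A·|x' - x|` whenever `|x' - x| ≥ B`. -/
theorem stmt10 (H : ℝ → ℝ → ℝ) (ρ : ℝ)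
    (hH : ContDiff ℝ 2 (Function.uncurry H))
    (hper : ∀ x x', H (x + 1) (x' + 1) = H x x')
    (hρ : 0 < ρ) (htwist : ∀ x x', D12 H x x' ≤ -ρ) :
    ∀ A : ℝ, 0 < A → ∃ B : ℝ, 0 < B ∧
      ∀ x x' : ℝ, B ≤ |x' - x| → A * |x' - x| ≤ H x x' := by
  intro A hA
  set F := Function.uncurry H with hFdef
  have hF1 : ContDiff ℝ 1 F := hH.of_le (by norm_num)
  have hFd : Differentiable ℝ F := hF1.differentiable one_ne_zero
  have hfderiv : ContDiff ℝ 1 (fderiv ℝ F) := hH.fderiv_right (by norm_num)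
  set φ : ℝ × ℝ → ℝ := fun p => fderiv ℝ F p (1, 0) with hφdef
  have hφ1 : ContDiff ℝ 1 φ := hfderiv.clm_apply contDiff_const
  have hφd : Differentiable ℝ φ := hφ1.differentiable one_ne_zero
  have hφc : Continuous φ := hφ1.continuous
  -- the first partial derivative
  have hD1 : ∀ x x', HasDerivAt (fun t => H t x') (φ (x, x')) x := by
    intro x x'
    have h := ((hFd (x, x')).hasFDerivAt).comp_hasDerivAt x
      (HasDerivAt.prodMk (hasDerivAt_id x) (hasDerivAt_const x x'))
    exact h
  have hD1eq : ∀ x x', D1 H x x' = φ (x, x') := fun x x' => (hD1 x x').deriv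
  -- the mixed derivative really is the derivative
  have hD12 : ∀ x x', HasDerivAt (fun t => D1 H x t) (D12 H x x') x' := by
    intro x x'
    have heq : (fun t => D1 H x t) = fun t => φ (x, t) := funext fun t => hD1eq x t
    have hdiff : DifferentiableAt ℝ (fun t => D1 H x t) x' := by
      rw [heq]
      exact (hφd (x, x')).comp x' (DifferentiableAt.prodMk (differentiableAt_const x) differentiableAt_id)
    exact hdiff.hasDerivAt
  -- key monotonicity estimate from the twist condition
  have hkey : ∀ x s t : ℝ, s ≤ t → D1 H x t ≤ D1 H x s - ρ * (t - s) := by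
    intro x s t hst
    have hder : ∀ u : ℝ, HasDerivAt (fun t => D1 H x t + ρ * t) (D12 H x u + ρ * 1) u :=
      fun u => (hD12 x u).add ((hasDerivAt_id u).const_mul ρ)
    have hanti : Antitone (fun t => D1 H x t + ρ * t) := by
      refine antitone_of_deriv_nonpos (fun u => (hder u).differentiableAt) (fun u => ?_)
      rw [(hder u).deriv]
      have := htwist x u
      linarith
    have := hanti hst
    simp only at this
    linarith
  -- periodicity of the diagonal functions
  have hcper : Function.Periodic (fun s => H s s) 1 := fun s => hper s s
  have hmper : Function.Periodic (fun s => D1 H s s) 1 := by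
    intro s
    show D1 H (s + 1) (s + 1) = D1 H s s
    unfold D1
    have heq : (fun t => H t (s + 1)) = (fun t => H (t - 1) s) := by
      funext t
      rw [← hper (t - 1) s, sub_add_cancel]
    rw [heq]
    have h2 := deriv_comp_sub_const (f := fun u => H u s) (a := (1:ℝ)) (x := s + 1)
    simp only [add_sub_cancel_right] at h2
    exact h2
  -- continuity of the diagonal functions
  have hcdiag : Continuous (fun s => H s s) :=
    hF1.continuous.comp (continuous_id.prodMk continuous_id)
  have hmdiag : Continuous (fun s => D1 H s s) := by
    have heq : (fun s => D1 H s s) = fun s => φ (s, s) := funext fun s => hD1eq s s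
    rw [heq]
    exact hφc.comp (continuous_id.prodMk continuous_id)
  obtain ⟨C, hC0, hC⟩ := aux_bound_of_periodic hcdiag hcper
  obtain ⟨M, hM0, hM⟩ := aux_bound_of_periodic hmdiag hmper
  -- continuity in the first slot
  have hcont : ∀ x' : ℝ, Continuous (fun s => D1 H s x') := by
    intro x'
    have heq : (fun s => D1 H s x') = fun s => φ (s, x') := funext fun s => hD1eq s x'
    rw [heq]
    exact hφc.comp (continuous_id.prodMk continuous_const)
  -- fundamental theorem of calculus in the first variable
  have hFTC : ∀ x x' : ℝ, H x' x' - H x x' = ∫ s in x..x', D1 H s x' := by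
    intro x x'
    refine (intervalIntegral.integral_eq_sub_of_hasDerivAt (f := fun s => H s x')
      (f' := fun s => D1 H s x') (fun s _ => ?_)
      ((hcont x').intervalIntegrable x x')).symm
    have h := hD1 s x'
    rwa [← hD1eq s x'] at h
  -- the main quadratic lower bound
  have hmain : ∀ x x' : ℝ, ρ / 2 * (x' - x) ^ 2 - M * |x' - x| - C ≤ H x x' := by
    intro x x'
    rcases le_total x x' with hxx | hxx
    · have h1 : (∫ s in x..x', D1 H s x') ≤ ∫ s in x..x', (M - ρ * (x' - s)) := by
        refine intervalIntegral.integral_mono_on hxx ((hcont x').intervalIntegrable x x')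
          (((continuous_const.sub (continuous_const.mul
            (continuous_const.sub continuous_id))).intervalIntegrable x x')) ?_
        intro s hs
        have h2 := hkey s s x' hs.2
        have h3 := (abs_le.mp (hM s)).2
        linarith
      have h2 : (∫ s in x..x', (M - ρ * (x' - s))) = M * (x' - x) - ρ * ((x' - x) ^ 2 / 2) := by
        have hi1 : IntervalIntegrable (fun s => ρ * (x' - s)) MeasureTheory.volume x x' :=
          (Continuous.intervalIntegrable (by fun_prop) x x')
        rw [intervalIntegral.integral_sub intervalIntegrable_const hi1,
          intervalIntegral.integral_const, intervalIntegral.integral_const_mul]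
        have h3 : (∫ s in x..x', (x' - s)) = (x' - x) ^ 2 / 2 := by
          rw [intervalIntegral.integral_comp_sub_left (fun u => u) x',
            integral_id]
          ring
        rw [h3]
        simp [smul_eq_mul]
        ring
      have hF := hFTC x x'
      have hCd := (abs_le.mp (hC x')).1
      have habs : |x' - x| = x' - x := abs_of_nonneg (by linarith)
      rw [habs]
      have hring : ρ / 2 * (x' - x) ^ 2 = ρ * ((x' - x) ^ 2 / 2) := by ring
      linarith
    · -- x' ≤ x
      have h1 : (∫ s in x'..x, (-M + ρ * (s - x'))) ≤ ∫ s in x'..x, D1 H s x' := by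
        refine intervalIntegral.integral_mono_on hxx
          (((continuous_const.add (continuous_const.mul
            (continuous_id.sub continuous_const))).intervalIntegrable x' x))
          ((hcont x').intervalIntegrable x' x) ?_
        intro s hs
        have h2 := hkey s x' s hs.1
        have h3 := (abs_le.mp (hM s)).1
        linarith
      have h2 : (∫ s in x'..x, (-M + ρ * (s - x'))) = -M * (x - x') + ρ * ((x - x') ^ 2 / 2) := by
        have hi1 : IntervalIntegrable (fun s => ρ * (s - x')) MeasureTheory.volume x' x :=
          (Continuous.intervalIntegrable (by fun_prop) x' x)
        rw [intervalIntegral.integral_add intervalIntegrable_const hi1,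
          intervalIntegral.integral_const, intervalIntegral.integral_const_mul]
        have h3 : (∫ s in x'..x, (s - x')) = (x - x') ^ 2 / 2 := by
          rw [intervalIntegral.integral_comp_sub_right (fun u => u) x',
            integral_id]
          ring
        rw [h3]
        simp [smul_eq_mul]
        ring
      have hF := hFTC x x'
      rw [intervalIntegral.integral_symm] at hF
      have hCd := (abs_le.mp (hC x')).1
      have habs : |x' - x| = x - x' := by rw [abs_sub_comm]; exact abs_of_nonneg (by linarith)
      rw [habs]
      have hring : ρ / 2 * (x' - x) ^ 2 = ρ * ((x - x') ^ 2 / 2) := by ring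
      have hsq : (x' - x) ^ 2 = (x - x') ^ 2 := by ring
      linarith
  -- conclude
  refine ⟨max 1 (2 * (A + M + C) / ρ), lt_of_lt_of_le one_pos (le_max_left _ _),
    fun x x' hB => ?_⟩
  have h := hmain x x'
  have hd1 : 1 ≤ |x' - x| := le_trans (le_max_left _ _) hB
  have hd2 : 2 * (A + M + C) / ρ ≤ |x' - x| := le_trans (le_max_right _ _) hB
  have hd3 : 2 * (A + M + C) ≤ ρ * |x' - x| := by
    rw [div_le_iff₀ hρ] at hd2
    linarith
  have hsq : (x' - x) ^ 2 = |x' - x| ^ 2 := (sq_abs _).symm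
  rw [hsq] at h
  nlinarith [h, hd1, hd3, hC0, hM0, hA.le]
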